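/- Let M = (L, μ0, Σ, δ) be an MDP. If there exists a (randomized) strategy α such that M with strategy α is strongly synchronizing, then there exists a pure strategy β such that M with strategy β is strongly synchronizing. -/

import Mathlib

open Filter

namespace SyncMDP

/-- A history: an initial state followed by a list of (action, state) steps. -/
structure Hist (L A : Type) where
  start : L
  steps : List (A × L)
deriving DecidableEq

variable {L A : Type}

/-- The last state of a history. -/
def Hist.last (h : Hist L A) : L := h.steps.foldl (fun _ p => p.2) h.start

/-- The length of a history. -/
def Hist.len (h : Hist L A) : ℕ := h.steps.length

/-- Extending a history by one action and one state. -/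
def Hist.extend (h : Hist L A) (a : A) (l : L) : Hist L A := ⟨h.start, h.steps ++ [(a, l)]⟩

/-- A probability distribution on a finite type. -/
def IsDist {S : Type} [Fintype S] (d : S → ℝ) : Prop :=
  (∀ s, 0 ≤ d s) ∧ ∑ s, d s = 1

/-- A probabilistic transition function. -/
def IsTrans [Fintype L] (δ : L → A → L → ℝ) : Prop := ∀ l a, IsDist (δ l a)

/-- A (randomized) strategy assigns a distribution over actions to every history. -/
def IsStrategy [Fintype A] (α : Hist L A → A → ℝ) : Prop :=
  ∀ h : Hist L A, (∀ a, 0 ≤ α h a) ∧ ∑ a, α h a = 1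

/-- A pure strategy plays one action with probability one after every history. -/
def PureStrat (α : Hist L A → A → ℝ) : Prop := ∀ h, ∃ a, α h a = 1

/-- A blind strategy only depends on the length of the history. -/
def BlindStrat (α : Hist L A → A → ℝ) : Prop :=
  ∀ h₁ h₂ : Hist L A, h₁.len = h₂.len → α h₁ = α h₂

/-- A memoryless strategy only depends on the last state of the history. -/
def Memoryless (α : Hist L A → A → ℝ) : Prop :=
  ∀ h₁ h₂ : Hist L A, h₁.last = h₂.last → α h₁ = α h₂

/-- Auxiliary product for the probability of a history: the first argument is the current
state, the second the history (prefix) read so far, the third the remaining steps. -/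
def prAux (δ : L → A → L → ℝ) (α : Hist L A → A → ℝ) : L → Hist L A → List (A × L) → ℝ
  | _, _, [] => 1
  | cur, pre, (a, l) :: rest => α pre a * δ cur a l * prAux δ α l (pre.extend a l) rest

/-- The probability `Pr^α(h)` of a history `h`. -/
def pr (μ0 : L → ℝ) (δ : L → A → L → ℝ) (α : Hist L A → A → ℝ) (h : Hist L A) : ℝ :=
  μ0 h.start * prAux δ α h.start ⟨h.start, []⟩ h.steps

variable (L A) in
/-- The finite set of all histories of length `n`. -/
def hists [Fintype L] [DecidableEq L] [Fintype A] [DecidableEq A] : ℕ → Finset (Hist L A)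
  | 0 => Finset.univ.image fun l : L => ⟨l, []⟩
  | n + 1 => (hists n).biUnion fun h => Finset.univ.image fun p : A × L => h.extend p.1 p.2

variable [Fintype L] [DecidableEq L] [Fintype A] [DecidableEq A]

/-- The outcome `X_n^α` : the distribution over states at step `n` under strategy `α`. -/
noncomputable def outcome (μ0 : L → ℝ) (δ : L → A → L → ℝ) (α : Hist L A → A → ℝ)
    (n : ℕ) (l : L) : ℝ :=
  ∑ h ∈ (hists L A n).filter (fun h => h.last = l), pr μ0 δ α h

/-- The norm `‖X‖ = max_{ℓ ∈ L} X(ℓ)` of a distribution on a (nonempty) finite type. -/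
noncomputable def dnorm (X : L → ℝ) : ℝ := ⨆ l, X l

/-- Strongly synchronizing: `liminf_n ‖X_n^α‖ = 1`. -/
def StronglySync (μ0 : L → ℝ) (δ : L → A → L → ℝ) (α : Hist L A → A → ℝ) : Prop :=
  liminf (fun n => dnorm (outcome μ0 δ α n)) atTop = 1

/-- Weakly synchronizing: `limsup_n ‖X_n^α‖ = 1`. -/
def WeaklySync (μ0 : L → ℝ) (δ : L → A → L → ℝ) (α : Hist L A → A → ℝ) : Prop :=
  limsup (fun n => dnorm (outcome μ0 δ α n)) atTop = 1

open Classical in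
/-- `Post_σ(ℓ)`: the support of `δ(ℓ,σ)`. -/
noncomputable def post (δ : L → A → L → ℝ) (l : L) (a : A) : Finset L :=
  Finset.univ.filter fun l' => 0 < δ l a l'

/-- Transition function of the perfect-information subset construction. -/
noncomputable def deltaP (δ : L → A → L → ℝ) (s : Finset L) (f : L → A) : Finset L :=
  s.biUnion fun l => post δ l (f l)

/-- Transition function of the blind subset construction. -/
noncomputable def deltaB (δ : L → A → L → ℝ) (s : Finset L) (a : A) : Finset L :=
  s.biUnion fun l => post δ l a

open Classical in
/-- The initial cell: the support of `μ0`. -/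
noncomputable def initCell (μ0 : L → ℝ) : Finset L :=
  Finset.univ.filter fun l => 0 < μ0 l

/-- Reachability of a cell from the initial cell in the perfect-information
subset construction. -/
def ReachP (μ0 : L → ℝ) (δ : L → A → L → ℝ) (s : Finset L) : Prop :=
  Relation.ReflTransGen (fun t t' => ∃ f : L → A, deltaP δ t f = t') (initCell μ0) s

/-- Reachability of a cell from the initial cell in the blind subset construction. -/
def ReachB (μ0 : L → ℝ) (δ : L → A → L → ℝ) (s : Finset L) : Prop :=
  Relation.ReflTransGen (fun t t' => ∃ a : A, deltaB δ t a = t') (initCell μ0) s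

/-- Cyclic successor on `Fin d`. -/
def cyc {d : ℕ} (hd : 0 < d) (i : Fin d) : Fin d := ⟨((i : ℕ) + 1) % d, Nat.mod_lt _ hd⟩

/-- A recurrent cyclic set for the cycle `(s, act)` of length `d` of the
perfect-information subset construction. -/
def IsRCSP {d : ℕ} (hd : 0 < d) (δ : L → A → L → ℝ) (s : Fin d → Finset L)
    (act : Fin d → L → A) (g : Fin d → Finset L) : Prop :=
  ∀ i : Fin d, (g i).Nonempty ∧ g i ⊆ s i ∧
    (g i).biUnion (fun l => post δ l (act i l)) = g (cyc hd i)

/-- A minimal recurrent cyclic set (perfect-information). -/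
def IsMinRCSP {d : ℕ} (hd : 0 < d) (δ : L → A → L → ℝ) (s : Fin d → Finset L)
    (act : Fin d → L → A) (g : Fin d → Finset L) : Prop :=
  IsRCSP hd δ s act g ∧
    ∀ g' : Fin d → Finset L, IsRCSP hd δ s act g' → (∀ i, g' i ⊆ g i) → g' = g

/-- A recurrent cyclic set for the cycle `(s, act)` of length `d` of the blind
subset construction. -/
def IsRCSB {d : ℕ} (hd : 0 < d) (δ : L → A → L → ℝ) (s : Fin d → Finset L)
    (act : Fin d → A) (g : Fin d → Finset L) : Prop :=
  ∀ i : Fin d, (g i).Nonempty ∧ g i ⊆ s i ∧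
    (g i).biUnion (fun l => post δ l (act i)) = g (cyc hd i)

/-- A minimal recurrent cyclic set (blind). -/
def IsMinRCSB {d : ℕ} (hd : 0 < d) (δ : L → A → L → ℝ) (s : Fin d → Finset L)
    (act : Fin d → A) (g : Fin d → Finset L) : Prop :=
  IsRCSB hd δ s act g ∧
    ∀ g' : Fin d → Finset L, IsRCSB hd δ s act g' → (∀ i, g' i ⊆ g i) → g' = g


section Basic

variable {L A : Type}

@[simp] lemma Hist.len_extend (h : Hist L A) (a : A) (l : L) :
    (h.extend a l).len = h.len + 1 := by
  simp [Hist.extend, Hist.len]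

@[simp] lemma Hist.last_extend (h : Hist L A) (a : A) (l : L) :
    (h.extend a l).last = l := by
  simp [Hist.extend, Hist.last]

/-- The prefix of a history consisting of its first `m` steps. -/
def Hist.take (m : ℕ) (h : Hist L A) : Hist L A := ⟨h.start, h.steps.take m⟩

@[simp] lemma Hist.take_len (h : Hist L A) {m : ℕ} (hm : h.len ≤ m) : h.take m = h := by
  cases h with
  | mk s st => simp [Hist.take, List.take_of_length_le hm]

@[simp] lemma Hist.len_take (h : Hist L A) (m : ℕ) : (h.take m).len = min m h.len := by
  simp [Hist.take, Hist.len]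

lemma Hist.take_extend_of_le (h : Hist L A) (a : A) (l : L) {m : ℕ} (hm : m ≤ h.len) :
    (h.extend a l).take m = h.take m := by
  simp [Hist.take, Hist.extend, List.take_append_of_le_length hm]

lemma Hist.take_extend_self (h : Hist L A) (a : A) (l : L) :
    (h.extend a l).take h.len = h := by
  rw [Hist.take_extend_of_le h a l le_rfl, Hist.take_len h le_rfl]

lemma prAux_append (δ : L → A → L → ℝ) (α : Hist L A → A → ℝ) :
    ∀ (xs ys : List (A × L)) (cur : L) (pre : Hist L A),
    prAux δ α cur pre (xs ++ ys) =
      prAux δ α cur pre xs *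
        prAux δ α (xs.foldl (fun _ p => p.2) cur) ⟨pre.start, pre.steps ++ xs⟩ ys := by
  intro xs
  induction xs with
  | nil => intro ys cur pre; simp [prAux]
  | cons p xs ih =>
    intro ys cur pre
    obtain ⟨a, l⟩ := p
    show α pre a * δ cur a l * prAux δ α l (pre.extend a l) (xs ++ ys) = _
    rw [ih ys l (pre.extend a l)]
    simp [prAux, Hist.extend, mul_assoc]

lemma pr_append (μ0 : L → ℝ) (δ : L → A → L → ℝ) (α : Hist L A → A → ℝ)
    (s : L) (st rest : List (A × L)) :
    pr μ0 δ α ⟨s, st ++ rest⟩ =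
      pr μ0 δ α ⟨s, st⟩ * prAux δ α (Hist.last ⟨s, st⟩) ⟨s, st⟩ rest := by
  unfold pr
  simp only [prAux_append δ α st rest]
  simp [Hist.last, mul_assoc]

lemma pr_extend (μ0 : L → ℝ) (δ : L → A → L → ℝ) (α : Hist L A → A → ℝ)
    (h : Hist L A) (a : A) (l : L) :
    pr μ0 δ α (h.extend a l) = pr μ0 δ α h * (α h a * δ h.last a l) := by
  cases h with
  | mk s st =>
    show pr μ0 δ α ⟨s, st ++ [(a, l)]⟩ = _
    rw [pr_append]
    simp [prAux, mul_assoc]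

section Nonneg

variable {μ0 : L → ℝ} {δ : L → A → L → ℝ} {α : Hist L A → A → ℝ}
variable (hμn : ∀ l, 0 ≤ μ0 l) (hδn : ∀ l a l', 0 ≤ δ l a l') (hαn : ∀ h a, 0 ≤ α h a)

include hδn hαn

lemma prAux_nonneg : ∀ (xs : List (A × L)) (cur : L) (pre : Hist L A),
    0 ≤ prAux δ α cur pre xs := by
  intro xs
  induction xs with
  | nil => intro cur pre; simp [prAux]
  | cons p xs ih =>
    intro cur pre
    obtain ⟨a, l⟩ := p
    exact mul_nonneg (mul_nonneg (hαn _ _) (hδn _ _ _)) (ih _ _)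

include hμn in
lemma pr_nonneg (h : Hist L A) : 0 ≤ pr μ0 δ α h :=
  mul_nonneg (hμn _) (prAux_nonneg hδn hαn _ _ _)

include hμn in
lemma pr_take_pos {h : Hist L A} (m : ℕ) (hp : 0 < pr μ0 δ α h) :
    0 < pr μ0 δ α (h.take m) := by
  rcases lt_or_ge (pr μ0 δ α (h.take m)) 0 with hlt | hle
  · exact absurd (pr_nonneg hμn hδn hαn (h.take m)) (not_le.2 hlt)
  rcases hle.lt_or_eq with hlt | heq
  · exact hlt
  exfalso
  have hdec : pr μ0 δ α h =
      pr μ0 δ α (h.take m) * prAux δ α (Hist.last (h.take m)) (h.take m) (h.steps.drop m) := by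
    conv_lhs => rw [show h = ⟨h.start, h.steps.take m ++ h.steps.drop m⟩ by
      cases h; simp]
    rw [pr_append]
    rfl
  rw [hdec, ← heq] at hp
  simp at hp

end Nonneg

end Basic

section Hists
set_option linter.unusedSectionVars false

variable {L A : Type} [Fintype L] [DecidableEq L] [Fintype A] [DecidableEq A]

lemma mem_hists {n : ℕ} {h : Hist L A} : h ∈ hists L A n ↔ h.len = n := by
  induction n generalizing h with
  | zero =>
    simp only [hists, Finset.mem_image, Finset.mem_univ, true_and]
    constructor
    · rintro ⟨l, rfl⟩; rfl
    · intro hl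
      refine ⟨h.start, ?_⟩
      cases h with
      | mk s st =>
        cases st with
        | nil => rfl
        | cons p t => simp [Hist.len] at hl
  | succ n ih =>
    simp only [hists, Finset.mem_biUnion, Finset.mem_image, Finset.mem_univ, true_and]
    constructor
    · rintro ⟨h₀, hh₀, p, rfl⟩
      rw [Hist.len_extend, ih.1 hh₀]
    · intro hl
      have hne : h.steps ≠ [] := by
        intro hnil
        rw [Hist.len, hnil] at hl
        simp at hl
      refine ⟨⟨h.start, h.steps.dropLast⟩, ih.2 ?_, (h.steps.getLast hne), ?_⟩
      · show h.steps.dropLast.length = n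
        have hl' : h.steps.length = n + 1 := hl
        rw [List.length_dropLast, hl']
        omega
      · cases h with
        | mk s st =>
          simp only [Hist.extend, Prod.mk.eta, Hist.mk.injEq, true_and]
          exact List.dropLast_append_getLast hne

lemma extend_injective {h₁ h₂ : Hist L A} (hl : h₁.len = h₂.len)
    {p q : A × L} (he : h₁.extend p.1 p.2 = h₂.extend q.1 q.2) : h₁ = h₂ ∧ p = q := by
  cases h₁ with
  | mk s₁ st₁ =>
    cases h₂ with
    | mk s₂ st₂ =>
      have hs : s₁ = s₂ ∧ st₁ ++ [p] = st₂ ++ [q] := by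
        constructor
        · exact congrArg Hist.start he
        · have := congrArg Hist.steps he
          simpa [Hist.extend] using this
      obtain ⟨rfl, hst⟩ := hs
      have hlen : st₁.length = st₂.length := hl
      obtain ⟨h1, h2⟩ := List.append_inj hst hlen
      refine ⟨by rw [h1], by simpa using h2⟩

lemma sum_hists_succ (n : ℕ) (g : Hist L A → ℝ) :
    ∑ h' ∈ hists L A (n+1), g h' =
      ∑ h ∈ hists L A n, ∑ p : A × L, g (h.extend p.1 p.2) := by
  show ∑ h' ∈ (hists L A n).biUnion _, g h' = _
  rw [Finset.sum_biUnion]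
  · refine Finset.sum_congr rfl fun h hh => ?_
    rw [Finset.sum_image]
    intro p _ q _ hpq
    exact (extend_injective rfl hpq).2
  · intro h₁ h₁m h₂ h₂m hne
    refine Finset.disjoint_left.2 fun x hx₁ hx₂ => ?_
    simp only [Finset.mem_image, Finset.mem_univ, true_and] at hx₁ hx₂
    obtain ⟨p, rfl⟩ := hx₁
    obtain ⟨q, hq⟩ := hx₂
    have hl : h₂.len = h₁.len := by
      rw [mem_hists.1 (Finset.mem_coe.1 h₁m), mem_hists.1 (Finset.mem_coe.1 h₂m)]
    exact hne ((extend_injective hl hq).1.symm ▸ rfl)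

open Classical in
lemma sum_hists_fiber (m k : ℕ) (g : Hist L A → ℝ) :
    ∑ h' ∈ hists L A (m+k), g h' =
      ∑ h ∈ hists L A m,
        ∑ h' ∈ (hists L A (m+k)).filter (fun h' => h'.take m = h), g h' := by
  refine (Finset.sum_fiberwise_of_maps_to (fun h' hh' => ?_) g).symm
  rw [mem_hists]
  have : h'.len = m + k := mem_hists.1 hh'
  simp [this]

variable (μ0 : L → ℝ) (δ : L → A → L → ℝ) (α : Hist L A → A → ℝ)

lemma sum_pr_extend (hδ : IsTrans δ) (hα : IsStrategy α) (h : Hist L A) :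
    ∑ p : A × L, pr μ0 δ α (h.extend p.1 p.2) = pr μ0 δ α h := by
  rw [Fintype.sum_prod_type]
  have : ∀ a : A, ∑ l : L, pr μ0 δ α (h.extend a l) = pr μ0 δ α h * α h a := by
    intro a
    simp only [pr_extend]
    rw [← Finset.mul_sum, ← Finset.mul_sum, (hδ h.last a).2]
    ring
  simp only [this]
  rw [← Finset.mul_sum, (hα h).2, mul_one]

open Classical in
lemma conserve (hδ : IsTrans δ) (hα : IsStrategy α) (h : Hist L A) (k : ℕ) :
    ∑ h' ∈ (hists L A (h.len + k)).filter (fun h' => h'.take h.len = h),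
      pr μ0 δ α h' = pr μ0 δ α h := by
  induction k with
  | zero =>
    have : (hists L A (h.len + 0)).filter (fun h' => h'.take h.len = h) = {h} := by
      ext h'
      simp only [Finset.mem_filter, Finset.mem_singleton, mem_hists]
      constructor
      · rintro ⟨hlen, htake⟩
        have hle : h'.len ≤ h.len := by omega
        rw [← htake, Hist.take_len h' hle]
      · rintro rfl
        exact ⟨rfl, Hist.take_len _ le_rfl⟩
    rw [this, Finset.sum_singleton]
  | succ k ih =>
    have hrw : h.len + (k + 1) = (h.len + k) + 1 := rfl
    rw [hrw, Finset.sum_filter, sum_hists_succ]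
    have : ∀ h'' ∈ hists L A (h.len + k),
        (∑ p : A × L, if (h''.extend p.1 p.2).take h.len = h
          then pr μ0 δ α (h''.extend p.1 p.2) else 0) =
        if h''.take h.len = h then pr μ0 δ α h'' else 0 := by
      intro h'' hm
      have hlen : h.len ≤ h''.len := by rw [mem_hists.1 hm]; omega
      have hcond : ∀ p : A × L, (h''.extend p.1 p.2).take h.len = h ↔ h''.take h.len = h := by
        intro p
        rw [Hist.take_extend_of_le _ _ _ hlen]
      by_cases hc : h''.take h.len = h
      · simp only [hcond, hc, if_true]
        exact sum_pr_extend μ0 δ α hδ hα h''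
      · simp [hcond, hc]
    rw [Finset.sum_congr rfl this, ← Finset.sum_filter, ih]

lemma total_mass (hμ0 : IsDist μ0) (hδ : IsTrans δ) (hα : IsStrategy α) (n : ℕ) :
    ∑ h ∈ hists L A n, pr μ0 δ α h = 1 := by
  induction n with
  | zero =>
    show ∑ h ∈ Finset.univ.image _, pr μ0 δ α h = 1
    rw [Finset.sum_image (by intro a _ b _ hab; exact congrArg Hist.start hab)]
    have : ∀ l : L, pr μ0 δ α ⟨l, []⟩ = μ0 l := by
      intro l; simp [pr, prAux]
    simp only [this]
    exact hμ0.2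
  | succ n ih =>
    rw [sum_hists_succ]
    have : ∀ h ∈ hists L A n, ∑ p : A × L, pr μ0 δ α (h.extend p.1 p.2) = pr μ0 δ α h :=
      fun h _ => sum_pr_extend μ0 δ α hδ hα h
    rw [Finset.sum_congr rfl this, ih]

end Hists

section Outcome
set_option linter.unusedSectionVars false

variable {L A : Type} [Fintype L] [DecidableEq L] [Fintype A] [DecidableEq A]

lemma IsDist.le_one' {S : Type} [Fintype S] {d : S → ℝ} (hd : IsDist d) (x : S) : d x ≤ 1 := by
  rw [← hd.2]
  exact Finset.single_le_sum (fun i _ => hd.1 i) (Finset.mem_univ x)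

lemma IsDist.dirac_zero {S : Type} [Fintype S] {d : S → ℝ} (hd : IsDist d) {x : S}
    (hx : d x = 1) {y : S} (hy : y ≠ x) : d y = 0 := by
  classical
  have hsum := hd.2
  have herase : ∑ s ∈ Finset.univ.erase x, d s = 0 := by
    have h2 := Finset.add_sum_erase Finset.univ d (Finset.mem_univ x)
    rw [hx] at h2
    rw [← h2] at hsum
    linarith
  have := (Finset.sum_eq_zero_iff_of_nonneg (fun i _ => hd.1 i)).1 herase
  exact this y (Finset.mem_erase.2 ⟨hy, Finset.mem_univ y⟩)

variable {μ0 : L → ℝ} {δ : L → A → L → ℝ} {α : Hist L A → A → ℝ}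
variable (hμ0 : IsDist μ0) (hδ : IsTrans δ) (hα : IsStrategy α)

lemma prn (hμ0 : IsDist μ0) (hδ : IsTrans δ) (hα : IsStrategy α) (h : Hist L A) :
    0 ≤ pr μ0 δ α h :=
  pr_nonneg hμ0.1 (fun l a l' => (hδ l a).1 l') (fun h a => (hα h).1 a) h

include hμ0 hδ hα

lemma outcome_nonneg (n : ℕ) (l : L) : 0 ≤ outcome μ0 δ α n l :=
  Finset.sum_nonneg fun h _ => prn hμ0 hδ hα h

lemma outcome_sum (n : ℕ) : ∑ l : L, outcome μ0 δ α n l = 1 := by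
  unfold outcome
  rw [Finset.sum_fiberwise_of_maps_to (fun h _ => Finset.mem_univ h.last)]
  exact total_mass μ0 δ α hμ0 hδ hα n

lemma outcome_le_one (n : ℕ) (l : L) : outcome μ0 δ α n l ≤ 1 := by
  rw [← outcome_sum hμ0 hδ hα n]
  exact Finset.single_le_sum (fun i _ => outcome_nonneg hμ0 hδ hα n i) (Finset.mem_univ l)

omit hμ0 hδ hα in
lemma dnorm_eq_max [Nonempty L] (X : L → ℝ) :
    ∃ lm : L, dnorm X = X lm ∧ ∀ l, X l ≤ X lm := by
  obtain ⟨lm, _, hlm⟩ := Finset.exists_max_image Finset.univ X Finset.univ_nonempty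
  refine ⟨lm, ?_, fun l => hlm l (Finset.mem_univ l)⟩
  refine le_antisymm (ciSup_le fun l => hlm l (Finset.mem_univ l)) ?_
  exact le_ciSup (Set.Finite.bddAbove (Set.finite_range X)) lm

lemma dnorm_le_one [Nonempty L] (n : ℕ) : dnorm (outcome μ0 δ α n) ≤ 1 :=
  ciSup_le fun l => outcome_le_one hμ0 hδ hα n l

omit hμ0 hδ hα in
lemma dnorm_ge [Nonempty L] (X : L → ℝ) (l : L) : X l ≤ dnorm X :=
  le_ciSup (Set.Finite.bddAbove (Set.finite_range X)) l

omit hμ0 in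
lemma outcome_rec (n : ℕ) (l' : L) :
    outcome μ0 δ α (n+1) l' =
      ∑ h ∈ hists L A n, pr μ0 δ α h * ∑ a, α h a * δ h.last a l' := by
  unfold outcome
  rw [Finset.sum_filter, sum_hists_succ]
  refine Finset.sum_congr rfl fun h _ => ?_
  rw [Fintype.sum_prod_type]
  have : ∀ a : A, (∑ l : L, if (h.extend a l).last = l' then pr μ0 δ α (h.extend a l) else 0)
      = pr μ0 δ α h * (α h a * δ h.last a l') := by
    intro a
    simp only [Hist.last_extend, pr_extend]
    rw [Finset.sum_ite_eq' Finset.univ l' (fun l => pr μ0 δ α h * (α h a * δ h.last a l))]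
    simp
  simp only [this]
  rw [← Finset.mul_sum]

lemma flow [Nonempty A] (n : ℕ) (l l' : L) :
    ∃ a, outcome μ0 δ α n l + outcome μ0 δ α (n+1) l' - 1 ≤ δ l a l' := by
  obtain ⟨a, _, ha⟩ := Finset.exists_max_image Finset.univ (fun a => δ l a l')
    Finset.univ_nonempty
  refine ⟨a, ?_⟩
  have hrec := outcome_rec (μ0 := μ0) hδ hα n l'
  have hw : ∀ h : Hist L A, 0 ≤ ∑ b, α h b * δ h.last b l' ∧
      (∑ b, α h b * δ h.last b l') ≤ 1 ∧
      (h.last = l → (∑ b, α h b * δ h.last b l') ≤ δ l a l') := by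
    intro h
    refine ⟨Finset.sum_nonneg fun b _ => mul_nonneg ((hα h).1 b) ((hδ h.last b).1 l'), ?_, ?_⟩
    · calc ∑ b, α h b * δ h.last b l' ≤ ∑ b, α h b * 1 :=
            Finset.sum_le_sum fun b _ =>
              mul_le_mul_of_nonneg_left ((hδ h.last b).le_one' l') ((hα h).1 b)
        _ = 1 := by simp only [mul_one]; exact (hα h).2
    · intro hl
      subst hl
      calc ∑ b, α h b * δ h.last b l' ≤ ∑ b, α h b * δ h.last a l' :=
            Finset.sum_le_sum fun b _ =>
              mul_le_mul_of_nonneg_left (ha b (Finset.mem_univ b)) ((hα h).1 b)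
        _ = δ h.last a l' := by rw [← Finset.sum_mul, (hα h).2, one_mul]
  classical
  have hsplit := Finset.sum_filter_add_sum_filter_not (hists L A n)
    (fun h => h.last = l) (fun h => pr μ0 δ α h * ∑ b, α h b * δ h.last b l')
  have h1 : ∑ h ∈ (hists L A n).filter (fun h => h.last = l),
      pr μ0 δ α h * ∑ b, α h b * δ h.last b l' ≤ δ l a l' * outcome μ0 δ α n l := by
    unfold outcome
    rw [Finset.mul_sum]
    refine Finset.sum_le_sum fun h hh => ?_
    have hl := (Finset.mem_filter.1 hh).2
    rw [mul_comm (δ l a l')]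
    exact mul_le_mul_of_nonneg_left ((hw h).2.2 hl) (prn hμ0 hδ hα h)
  have h2 : ∑ h ∈ (hists L A n).filter (fun h => ¬ h.last = l),
      pr μ0 δ α h * ∑ b, α h b * δ h.last b l' ≤ 1 - outcome μ0 δ α n l := by
    have hsub : ∑ h ∈ (hists L A n).filter (fun h => ¬ h.last = l),
        pr μ0 δ α h * ∑ b, α h b * δ h.last b l' ≤
        ∑ h ∈ (hists L A n).filter (fun h => ¬ h.last = l), pr μ0 δ α h := by
      refine Finset.sum_le_sum fun h _ => ?_
      have := (hw h).2.1
      nlinarith [prn hμ0 hδ hα h, (hw h).1]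
    have htot := Finset.sum_filter_add_sum_filter_not (hists L A n)
      (fun h => h.last = l) (pr μ0 δ α)
    rw [total_mass μ0 δ α hμ0 hδ hα n] at htot
    have : outcome μ0 δ α n l = ∑ h ∈ (hists L A n).filter (fun h => h.last = l),
        pr μ0 δ α h := rfl
    linarith
  have houtl : outcome μ0 δ α n l ≤ 1 := outcome_le_one hμ0 hδ hα n l
  have hδnn : 0 ≤ δ l a l' := (hδ l a).1 l'
  nlinarith [hrec, hsplit, h1, h2]

open Classical in
lemma funnel {h : Hist L A} (hp : 0 < pr μ0 δ α h) {n : ℕ} (hn : h.len ≤ n) {lt : L}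
    (hml : 1 - pr μ0 δ α h < outcome μ0 δ α n lt) :
    ∃ h', h' ∈ hists L A n ∧ h'.take h.len = h ∧ 0 < pr μ0 δ α h' ∧ h'.last = lt := by
  by_contra hcon
  push_neg at hcon
  set s := (hists L A n).filter (fun h' => h'.last = lt) with hs
  have hsplit := Finset.sum_filter_add_sum_filter_not s (fun h' => h'.take h.len = h)
    (pr μ0 δ α)
  have h0 : ∑ h' ∈ s.filter (fun h' => h'.take h.len = h), pr μ0 δ α h' = 0 := by
    refine Finset.sum_eq_zero fun h' hh' => ?_
    simp only [hs, Finset.mem_filter] at hh'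
    obtain ⟨⟨hmem, hlast⟩, htake⟩ := hh'
    have := hcon h' hmem htake
    have hnn := prn hμ0 hδ hα h'
    rcases lt_or_eq_of_le hnn with hlt | heq
    · exact absurd hlast (this hlt)
    · exact heq.symm
  have hsub : ∑ h' ∈ s.filter (fun h' => ¬ h'.take h.len = h), pr μ0 δ α h' ≤
      ∑ h' ∈ (hists L A n).filter (fun h' => ¬ h'.take h.len = h), pr μ0 δ α h' := by
    refine Finset.sum_le_sum_of_subset_of_nonneg ?_ (fun h' _ _ => prn hμ0 hδ hα h')
    exact Finset.filter_subset_filter _ (Finset.filter_subset _ _)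
  have hcons : ∑ h' ∈ (hists L A n).filter (fun h' => h'.take h.len = h),
      pr μ0 δ α h' = pr μ0 δ α h := by
    have hk : h.len + (n - h.len) = n := by omega
    have := conserve μ0 δ α hδ hα h (n - h.len)
    rw [hk] at this
    exact this
  have htot := Finset.sum_filter_add_sum_filter_not (hists L A n)
    (fun h' => h'.take h.len = h) (pr μ0 δ α)
  rw [total_mass μ0 δ α hμ0 hδ hα n] at htot
  have hout : outcome μ0 δ α n lt = ∑ h' ∈ s, pr μ0 δ α h' := rfl
  rw [hout] at hml
  linarith

end Outcome

section MoreHist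

variable {L A : Type}

lemma Hist.take_take (h : Hist L A) (m mm : ℕ) :
    (h.take m).take mm = h.take (min mm m) := by
  simp [Hist.take, List.take_take]

lemma take_succ_extend (h' : Hist L A) (m : ℕ) (hm : m < h'.len) :
    ∃ p : A × L, h'.take (m+1) = (h'.take m).extend p.1 p.2 := by
  have hm' : m < h'.steps.length := hm
  refine ⟨h'.steps[m], ?_⟩
  show Hist.mk h'.start (h'.steps.take (m+1)) = Hist.mk h'.start (h'.steps.take m ++ [_])
  congr 1
  rw [List.take_succ, List.getElem?_eq_getElem hm']
  rfl

lemma mod_succ_mod (m P : ℕ) : (m % P + 1) % P = (m + 1) % P :=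
  (Nat.mod_modEq m P).add_right 1

/-- The pair (last state, length mod `P`) tracked by the constructed strategy. -/
def pairOf (P : ℕ) (h : Hist L A) : L × ℕ := (h.last, h.len % P)

lemma pairOf_extend (P : ℕ) (h : Hist L A) (a : A) (l : L) :
    pairOf P (h.extend a l) = (l, ((pairOf P h).2 + 1) % P) := by
  simp only [pairOf, Hist.last_extend, Hist.len_extend]
  rw [mod_succ_mod]

lemma exists_pos_of_sum_one {S : Type} [Fintype S] {d : S → ℝ}
    (h1 : ∑ s, d s = 1) (h0 : ∀ s, 0 ≤ d s) : ∃ s, 0 < d s := by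
  by_contra hc
  push_neg at hc
  have : ∑ s, d s = 0 := le_antisymm (Finset.sum_nonpos fun s _ => hc s)
    (Finset.sum_nonneg fun s _ => h0 s)
  rw [h1] at this
  norm_num at this

end MoreHist

section Construction
set_option linter.unusedSectionVars false

variable {L A : Type} [Fintype L] [DecidableEq L] [Fintype A] [DecidableEq A]
variable [Nonempty L] [Nonempty A]

theorem construct {μ0 : L → ℝ} {δ : L → A → L → ℝ} (hμ0 : IsDist μ0) (hδ : IsTrans δ)
    (P : ℕ)
    (U Dp : Set (L × ℕ)) (f : L × ℕ → A) (tgt : ℕ → L) (R : L × ℕ → ℕ) (K : ℕ) (hK : 0 < K)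
    (η : ℝ) (hη0 : 0 < η) (hη1 : η ≤ 1)
    (hηδ : ∀ l a l', 0 < δ l a l' → η ≤ δ l a l')
    (hDU : Dp ⊆ U)
    (hclos : ∀ w ∈ U, ∀ l', 0 < δ w.1 (f w) l' → (l', (w.2 + 1) % P) ∈ U)
    (hDclos : ∀ w ∈ Dp, ∀ l', 0 < δ w.1 (f w) l' → (l', (w.2 + 1) % P) ∈ Dp)
    (htgt : ∀ n : ℕ, ∀ w ∈ Dp, w.2 = n % P → w.1 = tgt n)
    (hR0 : ∀ w ∈ U, (R w = 0 ↔ w ∈ Dp))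
    (hRK : ∀ w ∈ U, R w ≤ K)
    (hRdec : ∀ w ∈ U, R w ≠ 0 → ∃ l', 0 < δ w.1 (f w) l' ∧ R (l', (w.2 + 1) % P) < R w)
    (hinit : ∀ l, 0 < μ0 l → ((l, 0) : L × ℕ) ∈ U) :
    ∃ β : Hist L A → A → ℝ, IsStrategy β ∧ PureStrat β ∧ StronglySync μ0 δ β := by
  classical
  set fa : Hist L A → A :=
    fun h => if pairOf P h ∈ U then f (pairOf P h) else Classical.arbitrary A with hfa
  set β : Hist L A → A → ℝ := fun h a => if a = fa h then 1 else 0 with hβ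
  have hβs : IsStrategy β := by
    intro h
    constructor
    · intro a
      simp only [hβ]
      split <;> norm_num
    · simp only [hβ]
      rw [Finset.sum_ite_eq' Finset.univ (fa h) (fun _ => (1:ℝ))]
      simp
  have hβp : PureStrat β := fun h => ⟨fa h, by simp [hβ]⟩
  have hprn : ∀ h : Hist L A, 0 ≤ pr μ0 δ β h := fun h => prn hμ0 hδ hβs h
  have hfaU : ∀ h : Hist L A, pairOf P h ∈ U → fa h = f (pairOf P h) := by
    intro h hh
    simp [hfa, hh]
  -- positivity decomposition of a one-step extension
  have hpos_step : ∀ (h : Hist L A) (a : A) (l : L), 0 < pr μ0 δ β (h.extend a l) →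
      0 < pr μ0 δ β h ∧ a = fa h ∧ 0 < δ h.last a l := by
    intro h a l hp
    rw [pr_extend] at hp
    by_cases hafa : a = fa h
    · subst hafa
      have hβ1 : β h (fa h) = 1 := by simp [hβ]
      rw [hβ1, one_mul] at hp
      constructor
      · rcases (hprn h).lt_or_eq with h' | h'
        · exact h'
        · exfalso; rw [← h'] at hp; simp at hp
      refine ⟨rfl, ?_⟩
      rcases ((hδ h.last (fa h)).1 l).lt_or_eq with h' | h'
      · exact h'
      · exfalso; rw [← h'] at hp; simp at hp
    · exfalso
      have : β h a = 0 := by simp [hβ, hafa]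
      rw [this] at hp
      simp at hp
  -- invariance : positive histories have pairs in U
  have hinv : ∀ h : Hist L A, 0 < pr μ0 δ β h → pairOf P h ∈ U := by
    suffices hs : ∀ (st : List (A × L)) (s : L),
        0 < pr μ0 δ β ⟨s, st⟩ → pairOf P ⟨s, st⟩ ∈ U by
      intro h; cases h; exact hs _ _
    intro st
    induction st using List.reverseRecOn with
    | nil =>
      intro s hp
      have hμ : 0 < μ0 s := by
        have : pr μ0 δ β ⟨s, []⟩ = μ0 s := by simp [pr, prAux]
        rwa [this] at hp
      have : pairOf P (⟨s, []⟩ : Hist L A) = (s, 0) := by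
        simp [pairOf, Hist.last, Hist.len, Nat.zero_mod]
      rw [this]
      exact hinit s hμ
    | append_singleton st p ih =>
      intro s hp
      obtain ⟨a, l⟩ := p
      have hext : (⟨s, st ++ [(a, l)]⟩ : Hist L A) = (⟨s, st⟩ : Hist L A).extend a l := rfl
      rw [hext] at hp ⊢
      obtain ⟨hp0, hfa0, hδ0⟩ := hpos_step _ _ _ hp
      have hU := ih s hp0
      have := hclos _ hU l (by rwa [← hfaU _ hU, ← hfa0])
      have hpair := pairOf_extend P (⟨s, st⟩ : Hist L A) a l
      rw [hpair]
      exact this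
  -- one step preservation of Dp
  have hDstep : ∀ (h : Hist L A) (a : A) (l : L), 0 < pr μ0 δ β (h.extend a l) →
      pairOf P h ∈ Dp → pairOf P (h.extend a l) ∈ Dp := by
    intro h a l hp hD
    obtain ⟨hp0, hfa0, hδ0⟩ := hpos_step _ _ _ hp
    have hU : pairOf P h ∈ U := hDU hD
    have := hDclos _ hD l (by rwa [← hfaU _ hU, ← hfa0])
    have hpair := pairOf_extend P h a l
    rw [hpair]
    exact this
  -- extensions of good histories are good
  have hgoodext : ∀ (h h' : Hist L A), 0 < pr μ0 δ β h' → h'.take h.len = h →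
      pairOf P h ∈ Dp → pairOf P h' ∈ Dp := by
    have key : ∀ (k : ℕ) (h h' : Hist L A), h'.len = h.len + k → 0 < pr μ0 δ β h' →
        h'.take h.len = h → pairOf P h ∈ Dp → pairOf P h' ∈ Dp := by
      intro k
      induction k with
      | zero =>
        intro h h' hlen hp htake hD
        have : h'.take h.len = h' := Hist.take_len h' (by omega)
        rw [this] at htake
        rwa [htake]
      | succ k ih =>
        intro h h' hlen hp htake hD
        have hmlt : h.len + k < h'.len := by omega
        obtain ⟨p, hps⟩ := take_succ_extend h' (h.len + k) hmlt
        have hh' : h' = (h'.take (h.len + k)).extend p.1 p.2 := by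
          rw [← hps, Hist.take_len h' (by omega)]
        set h'' := h'.take (h.len + k) with hh''
        have hp'' : 0 < pr μ0 δ β h'' :=
          pr_take_pos hμ0.1 (fun l a l' => (hδ l a).1 l') (fun h a => (hβs h).1 a) _ hp
        have htake'' : h''.take h.len = h := by
          rw [hh'', Hist.take_take, min_eq_left (by omega)]
          exact htake
        have hD'' := ih h h'' (by rw [hh'']; simp [Hist.len_take]; omega) hp'' htake'' hD
        rw [hh'] at hp ⊢
        exact hDstep _ _ _ hp hD''
    intro h h' hp htake hD
    have hle : h.len ≤ h'.len := by
      have := congrArg Hist.len htake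
      rw [Hist.len_take] at this
      omega
    exact key (h'.len - h.len) h h' (by omega) hp htake hD
  -- the absorption walk
  have hAW : ∀ (k : ℕ) (h : Hist L A), 0 < pr μ0 δ β h → pairOf P h ∈ U →
      R (pairOf P h) ≤ k →
      ∃ h' : Hist L A, h'.take h.len = h ∧ h'.len = h.len + k ∧
        η ^ k * pr μ0 δ β h ≤ pr μ0 δ β h' ∧ pairOf P h' ∈ Dp := by
    intro k
    induction k with
    | zero =>
      intro h hp hU hR
      refine ⟨h, Hist.take_len h le_rfl, by omega, by simp, ?_⟩
      exact (hR0 _ hU).1 (by omega)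
    | succ k ih =>
      intro h hp hU hR
      by_cases hD : pairOf P h ∈ Dp
      · -- deterministic step within Dp
        obtain ⟨l', hl'⟩ := exists_pos_of_sum_one (hδ h.last (fa h)).2 (hδ h.last (fa h)).1
        have hl'' : 0 < δ (pairOf P h).1 (f (pairOf P h)) l' := by
          rw [hfaU _ hU] at hl'
          exact hl'
        have hstep : 0 < pr μ0 δ β (h.extend (fa h) l') := by
          rw [pr_extend]
          have hβ1 : β h (fa h) = 1 := by simp [hβ]
          rw [hβ1, one_mul]
          exact mul_pos hp hl'
        have hD1 : pairOf P (h.extend (fa h) l') ∈ Dp := hDstep _ _ _ hstep hD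
        have hU1 : pairOf P (h.extend (fa h) l') ∈ U := hDU hD1
        obtain ⟨h', ht', hl1, hpr', hD'⟩ := ih (h.extend (fa h) l') hstep hU1
          (by rw [(hR0 _ hU1).2 hD1]; omega)
        refine ⟨h', ?_, ?_, ?_, hD'⟩
        · rw [show (h.extend (fa h) l').len = h.len + 1 from Hist.len_extend h _ _] at ht'
          have hq : h'.take h.len = (h'.take (h.len+1)).take h.len := by
            rw [Hist.take_take, min_eq_left (by omega)]
          rw [hq, ht', Hist.take_extend_self]
        · rw [hl1, Hist.len_extend]; omega
        · calc η ^ (k+1) * pr μ0 δ β h ≤ η ^ k * pr μ0 δ β (h.extend (fa h) l') := by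
                rw [pr_extend]
                have hβ1 : β h (fa h) = 1 := by simp [hβ]
                rw [hβ1, one_mul, pow_succ]
                have hηl : η ≤ δ h.last (fa h) l' := hηδ _ _ _ hl'
                have hpk : (0:ℝ) ≤ η ^ k := le_of_lt (pow_pos hη0 k)
                nlinarith [hprn h, mul_nonneg (mul_nonneg hpk (hprn h)) (sub_nonneg.2 hηl)]
            _ ≤ pr μ0 δ β h' := hpr'
      · -- R-decreasing step
        have hRne : R (pairOf P h) ≠ 0 := fun hc => hD ((hR0 _ hU).1 hc)
        obtain ⟨l', hδl', hRl'⟩ := hRdec _ hU hRne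
        have hl' : 0 < δ h.last (fa h) l' := by
          rwa [hfaU _ hU]
        have hstep : 0 < pr μ0 δ β (h.extend (fa h) l') := by
          rw [pr_extend]
          have hβ1 : β h (fa h) = 1 := by simp [hβ]
          rw [hβ1, one_mul]
          exact mul_pos hp hl'
        have hpair := pairOf_extend P h (fa h) l'
        have hU1 : pairOf P (h.extend (fa h) l') ∈ U := by
          rw [hpair]
          exact hclos _ hU l' (by rwa [← hfaU _ hU])
        have hR1 : R (pairOf P (h.extend (fa h) l')) ≤ k := by
          rw [hpair]; omega
        obtain ⟨h', ht', hl1, hpr', hD'⟩ := ih (h.extend (fa h) l') hstep hU1 hR1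
        refine ⟨h', ?_, ?_, ?_, hD'⟩
        · rw [show (h.extend (fa h) l').len = h.len + 1 from Hist.len_extend h _ _] at ht'
          have hq : h'.take h.len = (h'.take (h.len+1)).take h.len := by
            rw [Hist.take_take, min_eq_left (by omega)]
          rw [hq, ht', Hist.take_extend_self]
        · rw [hl1, Hist.len_extend]; omega
        · calc η ^ (k+1) * pr μ0 δ β h ≤ η ^ k * pr μ0 δ β (h.extend (fa h) l') := by
                rw [pr_extend]
                have hβ1 : β h (fa h) = 1 := by simp [hβ]
                rw [hβ1, one_mul, pow_succ]
                have hηl : η ≤ δ h.last (fa h) l' := hηδ _ _ _ hl'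
                have hpk : (0:ℝ) ≤ η ^ k := le_of_lt (pow_pos hη0 k)
                nlinarith [hprn h, mul_nonneg (mul_nonneg hpk (hprn h)) (sub_nonneg.2 hηl)]
            _ ≤ pr μ0 δ β h' := hpr'
  -- the mass of good histories
  set G : ℕ → ℝ := fun n =>
    ∑ h ∈ hists L A n, (if pairOf P h ∈ Dp then pr μ0 δ β h else 0) with hG
  have hGnn : ∀ n, 0 ≤ G n := by
    intro n
    refine Finset.sum_nonneg fun h _ => ?_
    split
    · exact hprn h
    · exact le_rfl
  have hGle : ∀ n, G n ≤ 1 := by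
    intro n
    rw [hG]
    calc ∑ h ∈ hists L A n, (if pairOf P h ∈ Dp then pr μ0 δ β h else 0)
        ≤ ∑ h ∈ hists L A n, pr μ0 δ β h := by
          refine Finset.sum_le_sum fun h _ => ?_
          split
          · exact le_rfl
          · exact hprn h
      _ = 1 := total_mass μ0 δ β hμ0 hδ hβs n
  -- monotonicity of the good mass
  have hGmono1 : ∀ n, G n ≤ G (n + 1) := by
    intro n
    rw [hG]
    show _ ≤ ∑ h' ∈ hists L A (n+1), (if pairOf P h' ∈ Dp then pr μ0 δ β h' else 0)
    rw [sum_hists_succ]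
    refine Finset.sum_le_sum fun h _ => ?_
    by_cases hD : pairOf P h ∈ Dp
    · rw [if_pos hD]
      have heq : ∀ p : A × L,
          (if pairOf P (h.extend p.1 p.2) ∈ Dp then pr μ0 δ β (h.extend p.1 p.2) else 0)
          = pr μ0 δ β (h.extend p.1 p.2) := by
        intro p
        by_cases hD' : pairOf P (h.extend p.1 p.2) ∈ Dp
        · rw [if_pos hD']
        · rw [if_neg hD']
          rcases (hprn (h.extend p.1 p.2)).lt_or_eq with h' | h'
          · exact absurd (hDstep _ _ _ h' hD) hD'
          · exact h'
      rw [Finset.sum_congr rfl (fun p _ => heq p)]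
      rw [sum_pr_extend μ0 δ β hδ hβs h]
    · rw [if_neg hD]
      refine Finset.sum_nonneg fun p _ => ?_
      split
      · exact hprn _
      · exact le_rfl
  have hGmono : ∀ m n, m ≤ n → G m ≤ G n := by
    intro m n hmn
    induction n with
    | zero => rw [Nat.le_zero.1 hmn]
    | succ n ih =>
      rcases Nat.lt_or_ge m (n+1) with h | h
      · exact le_trans (ih (by omega)) (hGmono1 n)
      · rw [Nat.le_antisymm hmn h]
  -- the contraction step
  have hGK : ∀ n, G n + η ^ K * (1 - G n) ≤ G (n + K) := by
    intro n
    have hfib := sum_hists_fiber n K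
      (fun h' => if pairOf P h' ∈ Dp then pr μ0 δ β h' else 0)
    have claim : ∀ h ∈ hists L A n,
        (if pairOf P h ∈ Dp then pr μ0 δ β h else η ^ K * pr μ0 δ β h) ≤
        ∑ h' ∈ (hists L A (n+K)).filter (fun h' => h'.take n = h),
          (if pairOf P h' ∈ Dp then pr μ0 δ β h' else 0) := by
      intro h hh
      have hlen : h.len = n := mem_hists.1 hh
      by_cases hD : pairOf P h ∈ Dp
      · rw [if_pos hD]
        have heq : ∀ h' ∈ (hists L A (n+K)).filter (fun h' => h'.take n = h),
            (if pairOf P h' ∈ Dp then pr μ0 δ β h' else 0) = pr μ0 δ β h' := by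
          intro h' hh'
          obtain ⟨hmem, htake⟩ := Finset.mem_filter.1 hh'
          by_cases hD' : pairOf P h' ∈ Dp
          · rw [if_pos hD']
          · rw [if_neg hD']
            rcases (hprn h').lt_or_eq with hlt | heq0
            · exact absurd (hgoodext h h' hlt (by rwa [hlen]) hD) hD'
            · exact heq0
        rw [Finset.sum_congr rfl heq]
        have hcons := conserve μ0 δ β hδ hβs h K
        rw [hlen] at hcons
        rw [hcons]
      · rw [if_neg hD]
        rcases (hprn h).lt_or_eq with hlt | heq0
        · obtain ⟨h', htake', hlen', hpr', hD'⟩ := hAW K h hlt (hinv h hlt)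
            (hRK _ (hinv h hlt))
          have hmem' : h' ∈ (hists L A (n+K)).filter (fun h' => h'.take n = h) := by
            rw [Finset.mem_filter]
            constructor
            · rw [mem_hists, hlen']; omega
            · rwa [← hlen]
          calc η ^ K * pr μ0 δ β h ≤ pr μ0 δ β h' := hpr'
            _ = (if pairOf P h' ∈ Dp then pr μ0 δ β h' else 0) := by rw [if_pos hD']
            _ ≤ ∑ h' ∈ (hists L A (n+K)).filter (fun h' => h'.take n = h),
                (if pairOf P h' ∈ Dp then pr μ0 δ β h' else 0) := by
                refine Finset.single_le_sum
                  (f := fun h'' => if pairOf P h'' ∈ Dp then pr μ0 δ β h'' else 0)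
                  (fun i _ => ?_) hmem'
                show (0:ℝ) ≤ if pairOf P i ∈ Dp then pr μ0 δ β i else 0
                split
                · exact hprn _
                · exact le_rfl
        · rw [← heq0, mul_zero]
          refine Finset.sum_nonneg fun h' _ => ?_
          split
          · exact hprn _
          · exact le_rfl
    have hsum : ∑ h ∈ hists L A n,
        (if pairOf P h ∈ Dp then pr μ0 δ β h else η ^ K * pr μ0 δ β h) ≤ G (n + K) := by
      rw [hG]
      show _ ≤ ∑ h' ∈ hists L A (n+K), (if pairOf P h' ∈ Dp then pr μ0 δ β h' else 0)
      rw [hfib]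
      exact Finset.sum_le_sum claim
    have hlhs : ∑ h ∈ hists L A n,
        (if pairOf P h ∈ Dp then pr μ0 δ β h else η ^ K * pr μ0 δ β h) =
        G n + η ^ K * (1 - G n) := by
      have hptw : ∀ h : Hist L A,
          (if pairOf P h ∈ Dp then pr μ0 δ β h else η ^ K * pr μ0 δ β h) =
          (if pairOf P h ∈ Dp then pr μ0 δ β h else 0) +
            η ^ K * (pr μ0 δ β h - (if pairOf P h ∈ Dp then pr μ0 δ β h else 0)) := by
        intro h
        split <;> ring
      rw [Finset.sum_congr rfl (fun h _ => hptw h), Finset.sum_add_distrib,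
        ← Finset.mul_sum, Finset.sum_sub_distrib, total_mass μ0 δ β hμ0 hδ hβs n]
    linarith [hsum, hlhs.symm.le, hlhs.le]
  -- geometric absorption
  have hηK0 : 0 < η ^ K := pow_pos hη0 K
  have hηK1 : η ^ K ≤ 1 := pow_le_one₀ (le_of_lt hη0) hη1
  have hgeo : ∀ j : ℕ, 1 - G (K * j) ≤ (1 - η ^ K) ^ j := by
    intro j
    induction j with
    | zero =>
      have h0 := hGnn (K * 0)
      simp only [pow_zero, Nat.mul_zero] at h0 ⊢
      linarith
    | succ j ih =>
      have h1 := hGK (K * j)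
      have h2 : K * (j + 1) = K * j + K := by ring
      rw [h2]
      calc 1 - G (K * j + K) ≤ (1 - η ^ K) * (1 - G (K * j)) := by linarith
        _ ≤ (1 - η ^ K) * (1 - η ^ K) ^ j := by
            refine mul_le_mul_of_nonneg_left ih (by linarith)
        _ = (1 - η ^ K) ^ (j + 1) := by ring
  have hgeon : ∀ n : ℕ, 1 - G n ≤ (1 - η ^ K) ^ (n / K) := by
    intro n
    have h1 : K * (n / K) ≤ n := Nat.mul_div_le n K
    have h2 := hGmono (K * (n / K)) n h1
    calc 1 - G n ≤ 1 - G (K * (n / K)) := by linarith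
      _ ≤ (1 - η ^ K) ^ (n / K) := hgeo (n / K)
  -- outcome along the deterministic cycle
  have hout : ∀ n, G n ≤ outcome μ0 δ β n (tgt n) := by
    intro n
    rw [hG]
    show ∑ h ∈ hists L A n, (if pairOf P h ∈ Dp then pr μ0 δ β h else 0) ≤ _
    rw [← Finset.sum_filter]
    show _ ≤ ∑ h ∈ (hists L A n).filter (fun h => h.last = tgt n), pr μ0 δ β h
    refine Finset.sum_le_sum_of_subset_of_nonneg ?_ (fun h _ _ => hprn h)
    intro h hh
    obtain ⟨hmem, hD⟩ := Finset.mem_filter.1 hh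
    rw [Finset.mem_filter]
    refine ⟨hmem, ?_⟩
    have hlen : h.len = n := mem_hists.1 hmem
    have := htgt n (pairOf P h) hD (by simp [pairOf, hlen])
    simpa [pairOf] using this
  -- conclude
  have hdiv : Filter.Tendsto (fun n : ℕ => n / K) Filter.atTop Filter.atTop :=
    Filter.tendsto_atTop_atTop.2 fun b => ⟨b * K, fun n hn => (Nat.le_div_iff_mul_le hK).2 hn⟩
  have h0 : Filter.Tendsto (fun n : ℕ => (1 - η ^ K) ^ (n / K)) Filter.atTop (nhds 0) :=
    (tendsto_pow_atTop_nhds_zero_of_lt_one (by linarith) (by linarith)).comp hdiv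
  have hlowt : Filter.Tendsto (fun n : ℕ => 1 - (1 - η ^ K) ^ (n / K))
      Filter.atTop (nhds 1) := by
    have := Filter.Tendsto.const_sub (1:ℝ) h0
    simpa using this
  have ht : Filter.Tendsto (fun n => dnorm (outcome μ0 δ β n)) Filter.atTop (nhds 1) := by
    refine tendsto_of_tendsto_of_tendsto_of_le_of_le hlowt tendsto_const_nhds ?_ ?_
    · intro n
      have h1 := hgeon n
      have h2 := hout n
      have h3 := dnorm_ge (outcome μ0 δ β n) (tgt n)
      simp only []
      linarith
    · intro n
      exact dnorm_le_one hμ0 hδ hβs n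
  exact ⟨β, hβs, hβp, ht.liminf_eq⟩

end Construction

section FiberHelpers

lemma exists_unbounded_fiber {Y : Type} [Finite Y] (f : ℕ → Y) :
    ∃ y, ∀ N, ∃ n, N ≤ n ∧ f n = y := by
  by_contra hc
  push_neg at hc
  choose Nf hNf using hc
  haveI := Fintype.ofFinite Y
  set M := Finset.univ.sup Nf with hM
  exact hNf (f M) M (Finset.le_sup (Finset.mem_univ (f M))) rfl

lemma mod_shift (b c P : ℕ) (hc : c ≤ P) : (b % P + P - c) % P = (b + P - c) % P := by
  have h1 : b % P + P - c = b % P + (P - c) := by omega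
  have h2 : b + P - c = b + (P - c) := by omega
  rw [h1, h2]
  exact (Nat.mod_modEq b P).add_right (P - c)

end FiberHelpers

/-- If an MDP has a strongly synchronizing (randomized) strategy,
then it has a strongly synchronizing pure strategy. -/
theorem pure_sufficient_strongly
    (μ0 : L → ℝ) (δ : L → A → L → ℝ)
    (hμ0 : IsDist μ0) (hδ : IsTrans δ)
    (h : ∃ α : Hist L A → A → ℝ, IsStrategy α ∧ StronglySync μ0 δ α) :
    ∃ β : Hist L A → A → ℝ, IsStrategy β ∧ PureStrat β ∧ StronglySync μ0 δ β := by
  classical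
  obtain ⟨α, hαs, hsync⟩ := h
  -- nonemptiness
  have hNL : Nonempty L := by
    rcases isEmpty_or_nonempty L with hE | hN
    · exfalso
      have h2 := hμ0.2
      rw [Finset.univ_eq_empty, Finset.sum_empty] at h2
      norm_num at h2
    · exact hN
  haveI := hNL
  have hNA : Nonempty A := by
    rcases isEmpty_or_nonempty A with hE | hN
    · exfalso
      have h2 := (hαs (⟨Classical.arbitrary L, []⟩ : Hist L A)).2
      rw [Finset.univ_eq_empty, Finset.sum_empty] at h2
      norm_num at h2
    · exact hN
  haveI := hNA
  -- argmax sequence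
  have hmax : ∀ n : ℕ, ∃ lm : L, dnorm (outcome μ0 δ α n) = outcome μ0 δ α n lm ∧
      ∀ l, outcome μ0 δ α n l ≤ outcome μ0 δ α n lm := fun n => dnorm_eq_max _
  choose ls hls1 hls2 using hmax
  -- eventual concentration
  have hconc : ∀ ε : ℝ, 0 < ε → ∃ N, ∀ n, N ≤ n → 1 - ε < outcome μ0 δ α n (ls n) := by
    intro ε hε
    have hb : Filter.IsBoundedUnder (· ≤ ·) Filter.atTop
        (fun n => dnorm (outcome μ0 δ α n)) :=
      Filter.isBoundedUnder_of ⟨1, fun n => dnorm_le_one hμ0 hδ hαs n⟩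
    have hb2 : Filter.IsBoundedUnder (· ≥ ·) Filter.atTop
        (fun n => dnorm (outcome μ0 δ α n)) :=
      Filter.isBoundedUnder_of ⟨0, fun n =>
        le_trans (outcome_nonneg hμ0 hδ hαs n (Classical.arbitrary L))
          (dnorm_ge _ (Classical.arbitrary L))⟩
    have hsync' : Filter.liminf (fun n => dnorm (outcome μ0 δ α n)) Filter.atTop = 1 := hsync
    have hlt : (1 - ε : ℝ) < Filter.liminf (fun n => dnorm (outcome μ0 δ α n)) Filter.atTop := by
      rw [hsync']; linarith
    have hev := Filter.eventually_lt_of_lt_liminf hlt hb2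
    rw [Filter.eventually_atTop] at hev
    obtain ⟨N, hN⟩ := hev
    refine ⟨N, fun n hn => ?_⟩
    have := hN n hn
    rwa [hls1 n] at this
  -- the second largest transition value θ
  set vals : Finset ℝ :=
    (Finset.univ : Finset (L × A × L)).image (fun x => δ x.1 x.2.1 x.2.2) with hvals
  set valslt := vals.filter (· < 1) with hvalslt
  set θ : ℝ := if hne : valslt.Nonempty then valslt.max' hne else 0 with hθ
  have hvnn : ∀ v ∈ vals, 0 ≤ v := by
    intro v hv
    rw [hvals] at hv
    obtain ⟨x, _, rfl⟩ := Finset.mem_image.1 hv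
    exact (hδ x.1 x.2.1).1 x.2.2
  have hθ0 : 0 ≤ θ := by
    rw [hθ]
    split
    · next hne =>
      exact hvnn _ (Finset.mem_filter.1 (valslt.max'_mem hne)).1
    · exact le_rfl
  have hθlt : θ < 1 := by
    rw [hθ]
    split
    · next hne =>
      exact (Finset.mem_filter.1 (valslt.max'_mem hne)).2
    · norm_num
  have hθub : ∀ l a l', δ l a l' < 1 → δ l a l' ≤ θ := by
    intro l a l' hlt
    have hmem : δ l a l' ∈ valslt := by
      rw [hvalslt, Finset.mem_filter]
      exact ⟨Finset.mem_image.2 ⟨(l, a, l'), Finset.mem_univ _, rfl⟩, hlt⟩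
    have hne : valslt.Nonempty := ⟨_, hmem⟩
    rw [hθ, dif_pos hne]
    exact valslt.le_max' _ hmem
  -- threshold and N₀
  obtain ⟨N₀, hN₀⟩ := hconc ((1 - θ)/2) (by linarith)
  have hm : ∀ n, N₀ ≤ n → (1 + θ)/2 < outcome μ0 δ α n (ls n) := by
    intro n hn
    have := hN₀ n hn
    linarith
  have hmpos : ∀ n, N₀ ≤ n → 0 < outcome μ0 δ α n (ls n) := by
    intro n hn
    have := hm n hn
    linarith
  -- spine determinism
  have hdet : ∀ n : ℕ, ∃ a, N₀ ≤ n → δ (ls n) a (ls (n+1)) = 1 := by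
    intro n
    by_cases hn : N₀ ≤ n
    · obtain ⟨a, ha⟩ := flow hμ0 hδ hαs n (ls n) (ls (n+1))
      refine ⟨a, fun _ => ?_⟩
      by_contra hne
      have hle1 : δ (ls n) a (ls (n+1)) ≤ 1 := (hδ (ls n) a).le_one' _
      have hlt1 : δ (ls n) a (ls (n+1)) < 1 := lt_of_le_of_ne hle1 hne
      have hθb := hθub _ _ _ hlt1
      have h1 := hm n hn
      have h2 := hm (n+1) (by omega)
      linarith
    · exact ⟨Classical.arbitrary A, fun hc => absurd hc hn⟩
  choose aS haS using hdet
  have hdirac : ∀ n, N₀ ≤ n → ∀ l', 0 < δ (ls n) (aS n) l' → l' = ls (n+1) := by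
    intro n hn l' hpos
    by_contra hne
    rw [(hδ (ls n) (aS n)).dirac_zero (haS n hn) hne] at hpos
    exact lt_irrefl 0 hpos
  -- the recurrent state and the period
  obtain ⟨lstar, hlstar⟩ := exists_unbounded_fiber (fun k => ls (N₀ + k))
  have hTp : ∀ N, ∃ n, N ≤ n ∧ N₀ ≤ n ∧ ls n = lstar := by
    intro N
    obtain ⟨k, hk, hfk⟩ := hlstar N
    exact ⟨N₀ + k, by omega, by omega, hfk⟩
  obtain ⟨n₁, _, hn₁N₀, hlsn₁⟩ := hTp 0
  obtain ⟨n₂, hn₂ge, hn₂N₀, hlsn₂⟩ := hTp (n₁ + 1)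
  set P := n₂ - n₁ with hPdef
  have hP : 0 < P := by omega
  have hn₂sum : n₂ = n₁ + P := by omega
  -- the aligned residue c
  have hu : ∀ N : ℕ, ∃ n, N ≤ n ∧ N₀ ≤ n ∧ ls n = lstar := hTp
  choose u hu1 hu2 hu3 using hu
  obtain ⟨c, hc⟩ := exists_unbounded_fiber (fun k => Fin.mk (u k % P) (Nat.mod_lt _ hP))
  have hcP : (c : ℕ) < P := c.2
  have hTc : ∀ N, ∃ t, N ≤ t ∧ N₀ ≤ t ∧ ls t = lstar ∧ t % P = (c : ℕ) := by
    intro N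
    obtain ⟨k, hk, hfk⟩ := hc N
    refine ⟨u k, le_trans hk (hu1 k), hu2 k, hu3 k, ?_⟩
    have := congrArg Fin.val hfk
    simpa using this
  -- the minimal positive transition probability η
  have hposne : ∃ v ∈ vals.filter (0 < ·), True := by
    obtain ⟨l⟩ := hNL
    obtain ⟨a⟩ := hNA
    obtain ⟨l', hl'⟩ := exists_pos_of_sum_one (hδ l a).2 (hδ l a).1
    exact ⟨δ l a l', Finset.mem_filter.2
      ⟨Finset.mem_image.2 ⟨(l, a, l'), Finset.mem_univ _, rfl⟩, hl'⟩, trivial⟩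
  have hposne' : (vals.filter (0 < ·)).Nonempty := by
    obtain ⟨v, hv, -⟩ := hposne
    exact ⟨v, hv⟩
  set η := (vals.filter (0 < ·)).min' hposne' with hη
  have hη0 : 0 < η := (Finset.mem_filter.1 ((vals.filter (0 < ·)).min'_mem hposne')).2
  have hηδ : ∀ l a l', 0 < δ l a l' → η ≤ δ l a l' := by
    intro l a l' hpos
    refine (vals.filter (0 < ·)).min'_le _ (Finset.mem_filter.2 ⟨?_, hpos⟩)
    exact Finset.mem_image.2 ⟨(l, a, l'), Finset.mem_univ _, rfl⟩
  have hη1 : η ≤ 1 := by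
    obtain ⟨l⟩ := hNL
    obtain ⟨a⟩ := hNA
    obtain ⟨l', hl'⟩ := exists_pos_of_sum_one (hδ l a).2 (hδ l a).1
    exact le_trans (hηδ _ _ _ hl') ((hδ l a).le_one' l')
  -- the sets of pairs
  set V : Set (L × ℕ) := {w | ∃ hh : Hist L A, 0 < pr μ0 δ α hh ∧ pairOf P hh = w} with hVdef
  set SPp : Set (L × ℕ) := {w | ∃ n, N₀ ≤ n ∧ (ls n, n % P) = w} with hSPdef
  set Dp : Set (L × ℕ) :=
    {w | w.2 < P ∧ w.1 = ls (n₁ + (w.2 + P - (c : ℕ)) % P)} with hDpdef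
  set U : Set (L × ℕ) := V ∪ Dp with hUdef
  have hSPV : SPp ⊆ V := by
    intro w hw
    obtain ⟨n, hnN₀, hw⟩ := hw
    have hpos := hmpos n hnN₀
    have hex : ∃ hh ∈ (hists L A n).filter (fun hh => hh.last = ls n),
        0 < pr μ0 δ α hh := by
      by_contra hcon
      push_neg at hcon
      have : outcome μ0 δ α n (ls n) ≤ 0 := by
        refine Finset.sum_nonpos fun hh hhm => ?_
        rcases (prn hμ0 hδ hαs hh).lt_or_eq with hlt | heq
        · exact absurd hlt (not_lt.2 (hcon hh hhm))
        · exact le_of_eq heq.symm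
      linarith
    obtain ⟨hh, hhm, hhpos⟩ := hex
    obtain ⟨hmem, hlast⟩ := Finset.mem_filter.1 hhm
    refine ⟨hh, hhpos, ?_⟩
    rw [← hw]
    have hlen : hh.len = n := mem_hists.1 hmem
    simp [pairOf, hlast, hlen]
  have hDpt0 : ((lstar, (c : ℕ)) : L × ℕ) ∈ Dp := by
    rw [hDpdef]
    refine ⟨hcP, ?_⟩
    have h1 : (c : ℕ) + P - (c : ℕ) = P := by omega
    simp only [h1, Nat.mod_self, Nat.add_zero]
    exact hlsn₁.symm
  -- hitting times for positive histories
  set hit : Hist L A → Set ℕ := fun hh =>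
    {k | ∃ h' : Hist L A, h'.take hh.len = hh ∧ h'.len = hh.len + k ∧
      0 < pr μ0 δ α h' ∧ N₀ ≤ hh.len + k ∧ h'.last = ls (hh.len + k)} with hhitdef
  have hitNE : ∀ hh : Hist L A, 0 < pr μ0 δ α hh → (hit hh).Nonempty := by
    intro hh hp
    obtain ⟨N, hN⟩ := hconc (pr μ0 δ α hh) hp
    set n := max N (max N₀ hh.len) with hn
    have h1 : N ≤ n := le_max_left _ _
    have h2 : N₀ ≤ n := le_trans (le_max_left _ _) (le_max_right _ _)
    have h3 : hh.len ≤ n := le_trans (le_max_right _ _) (le_max_right _ _)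
    obtain ⟨h', hmem, htake, hpos, hlast⟩ := funnel hμ0 hδ hαs hp h3 (hN n h1)
    refine ⟨n - hh.len, h', htake, ?_, hpos, by omega, ?_⟩
    · rw [mem_hists.1 hmem]; omega
    · rw [show hh.len + (n - hh.len) = n by omega]
      exact hlast
  set ρ : L × ℕ → ℕ := fun w =>
    sInf {m | ∃ hh : Hist L A, 0 < pr μ0 δ α hh ∧ pairOf P hh = w ∧ sInf (hit hh) = m}
    with hρdef
  have hρmem : ∀ w ∈ V, ∃ hh : Hist L A, 0 < pr μ0 δ α hh ∧ pairOf P hh = w ∧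
      sInf (hit hh) = ρ w := by
    intro w hw
    obtain ⟨hh, hp, hpair⟩ := hw
    have hne : {m | ∃ hh : Hist L A, 0 < pr μ0 δ α hh ∧ pairOf P hh = w ∧
        sInf (hit hh) = m}.Nonempty := ⟨sInf (hit hh), hh, hp, hpair, rfl⟩
    exact Nat.sInf_mem hne
  have hρ0SP : ∀ w ∈ V, ρ w = 0 → w ∈ SPp := by
    intro w hw hρ0
    obtain ⟨hh, hp, hpair, hinf⟩ := hρmem w hw
    rw [hρ0] at hinf
    have h0 : 0 ∈ hit hh := by
      rw [← hinf]
      exact Nat.sInf_mem (hitNE hh hp)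
    obtain ⟨h', htake, hlen', hpos', hN₀', hlast'⟩ := h0
    have hq : h' = hh := by
      have h2 : h'.take hh.len = h' := Hist.take_len h' (by omega)
      rw [h2] at htake
      exact htake
    rw [hq] at hlast'
    refine ⟨hh.len, by omega, ?_⟩
    rw [← hpair]
    have hlast2 : hh.last = ls hh.len := by simpa using hlast'
    simp [pairOf, hlast2]
  -- region-3 step
  have hVex : ∀ w, w ∈ V → w ∉ SPp → ∃ a : A,
      (∀ l', 0 < δ w.1 a l' → ((l', (w.2 + 1) % P) : L × ℕ) ∈ V) ∧
      (∃ l', 0 < δ w.1 a l' ∧ ρ (l', (w.2 + 1) % P) < ρ w) := by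
    intro w hwV hwS
    have hρpos : ρ w ≠ 0 := fun hc => hwS (hρ0SP w hwV hc)
    obtain ⟨hh, hp, hpair, hinf⟩ := hρmem w hwV
    have hmem : ρ w ∈ hit hh := by
      rw [← hinf]
      exact Nat.sInf_mem (hitNE hh hp)
    obtain ⟨h', htake, hlen', hpos', hN₀', hlast'⟩ := hmem
    have hll : hh.len < h'.len := by omega
    obtain ⟨p, hps⟩ := take_succ_extend h' hh.len hll
    rw [htake] at hps
    have hpos1 : 0 < pr μ0 δ α (hh.extend p.1 p.2) := by
      rw [← hps]
      exact pr_take_pos hμ0.1 (fun l a l' => (hδ l a).1 l') (fun hh a => (hαs hh).1 a) _ hpos'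
    have hαp : 0 < α hh p.1 := by
      rcases ((hαs hh).1 p.1).lt_or_eq with hgt | heq
      · exact hgt
      · exfalso
        rw [pr_extend, ← heq] at hpos1
        simp at hpos1
    have hδp : 0 < δ hh.last p.1 p.2 := by
      rcases ((hδ hh.last p.1).1 p.2).lt_or_eq with hgt | heq
      · exact hgt
      · exfalso
        rw [pr_extend, ← heq] at hpos1
        simp at hpos1
    have hw1 : w.1 = hh.last := by rw [← hpair]; rfl
    have hw2 : w.2 = hh.len % P := by rw [← hpair]; rfl
    refine ⟨p.1, ?_, p.2, by rw [hw1]; exact hδp, ?_⟩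
    · intro l' hδl'
      refine ⟨hh.extend p.1 l', ?_, ?_⟩
      · rw [pr_extend]
        refine mul_pos hp (mul_pos hαp ?_)
        rw [← hw1]
        exact hδl'
      · rw [pairOf_extend, hpair]
    · -- rank decrease
      set h₁ := hh.extend p.1 p.2 with hh₁
      have hpair1 : pairOf P h₁ = (p.2, (w.2 + 1) % P) := by
        rw [hh₁, pairOf_extend, hpair]
      have hlen1 : h₁.len = hh.len + 1 := Hist.len_extend hh p.1 p.2
      have hhit1 : ρ w - 1 ∈ hit h₁ := by
        refine ⟨h', ?_, by omega, hpos', by omega, ?_⟩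
        · rw [hlen1, ← hps]
        · rw [show h₁.len + (ρ w - 1) = hh.len + ρ w by omega]
          exact hlast'
      have hle1 : sInf (hit h₁) ≤ ρ w - 1 := Nat.sInf_le hhit1
      have hle2 : ρ (p.2, (w.2 + 1) % P) ≤ sInf (hit h₁) := by
        refine Nat.sInf_le ?_
        exact ⟨h₁, hpos1, hpair1, rfl⟩
      omega
  -- spine pairs and their distances
  set τ : ℕ → ℕ := fun n =>
    sInf {t | n ≤ t ∧ N₀ ≤ t ∧ ls t = lstar ∧ t % P = (c : ℕ)} with hτdef
  have hτne : ∀ n, {t | n ≤ t ∧ N₀ ≤ t ∧ ls t = lstar ∧ t % P = (c : ℕ)}.Nonempty := by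
    intro n
    obtain ⟨t, h1, h2, h3, h4⟩ := hTc n
    exact ⟨t, h1, h2, h3, h4⟩
  have hτmem : ∀ n, n ≤ τ n ∧ N₀ ≤ τ n ∧ ls (τ n) = lstar ∧ τ n % P = (c : ℕ) :=
    fun n => Nat.sInf_mem (hτne n)
  set dist : L × ℕ → ℕ := fun w =>
    sInf {m | ∃ n, (N₀ ≤ n ∧ (ls n, n % P) = w) ∧ τ n - n = m} with hdistdef
  have hSPex : ∀ w, w ∈ SPp → ∃ n, (N₀ ≤ n ∧ (ls n, n % P) = w) ∧ τ n - n = dist w := by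
    intro w hw
    obtain ⟨n, hn1, hn2⟩ := hw
    have hne : {m | ∃ n, (N₀ ≤ n ∧ (ls n, n % P) = w) ∧ τ n - n = m}.Nonempty :=
      ⟨τ n - n, n, ⟨hn1, hn2⟩, rfl⟩
    exact Nat.sInf_mem hne
  -- the action choice
  set fD : L × ℕ → A := fun w => aS (n₁ + (w.2 + P - (c : ℕ)) % P) with hfDdef
  set fc : L × ℕ → A := fun w =>
    if w ∈ Dp then fD w
    else if hS : w ∈ SPp then aS (Classical.choose (hSPex w hS))
    else if hV2 : w ∈ V then Classical.choose (hVex w hV2 hS)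
    else Classical.arbitrary A
    with hfcdef
  -- membership in the second coordinate range
  have hVlt : ∀ w ∈ V, w.2 < P := by
    intro w hw
    obtain ⟨hh, _, hpair⟩ := hw
    rw [← hpair]
    exact Nat.mod_lt _ hP
  have hUlt : ∀ w ∈ U, w.2 < P := by
    intro w hw
    rcases hw with hw | hw
    · exact hVlt w hw
    · exact hw.1
  -- ranks
  set Pairs : Finset (L × ℕ) := Finset.univ ×ˢ Finset.range P with hPairs
  have hPairsmem : ∀ w : L × ℕ, w.2 < P → w ∈ Pairs := by
    intro w hw
    rw [hPairs, Finset.mem_product]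
    exact ⟨Finset.mem_univ _, Finset.mem_range.2 hw⟩
  set Dmax : ℕ := Pairs.sup dist with hDmax
  have hdistle : ∀ w : L × ℕ, w.2 < P → dist w ≤ Dmax :=
    fun w hw => Finset.le_sup (hPairsmem w hw)
  set R : L × ℕ → ℕ := fun w =>
    if w ∈ Dp then 0 else if w ∈ SPp then 1 + dist w else 1 + Dmax + ρ w with hRdef
  set K : ℕ := 1 + Pairs.sup R with hKdef
  have hK : 0 < K := by omega
  have hRK : ∀ w ∈ U, R w ≤ K := by
    intro w hw
    have := Finset.le_sup (f := R) (hPairsmem w (hUlt w hw))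
    omega
  have hR0 : ∀ w ∈ U, (R w = 0 ↔ w ∈ Dp) := by
    intro w _
    constructor
    · intro hR
      by_contra hD
      rw [hRdef] at hR
      simp only [if_neg hD] at hR
      split at hR <;> omega
    · intro hD
      rw [hRdef]
      simp [hD]
  -- the Dp step
  have hDstep0 : ∀ w ∈ Dp, ∀ l', 0 < δ w.1 (fD w) l' →
      ((l', (w.2 + 1) % P) : L × ℕ) ∈ Dp := by
    intro w hw l' hδl'
    obtain ⟨hw2, hw1⟩ := hw
    set j := (w.2 + P - (c : ℕ)) % P with hj
    have hjP : j < P := Nat.mod_lt _ hP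
    have hnN₀ : N₀ ≤ n₁ + j := by omega
    have hl' : l' = ls (n₁ + j + 1) := by
      refine hdirac (n₁ + j) hnN₀ l' ?_
      rw [← hw1]
      exact hδl'
    have he1 : (((w.2 + 1) % P) + P - (c : ℕ)) % P = ((w.2 + 1) + P - (c : ℕ)) % P :=
      mod_shift _ _ _ (le_of_lt hcP)
    have he2 : ((w.2 + 1) + P - (c : ℕ)) % P = ((w.2 + P - (c : ℕ)) + 1) % P := by
      congr 1
      omega
    have he3 : ((w.2 + P - (c : ℕ)) + 1) % P = (j + 1) % P := by
      rw [hj, mod_succ_mod]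
    refine ⟨Nat.mod_lt _ hP, ?_⟩
    show l' = ls (n₁ + (((w.2 + 1) % P) + P - (c : ℕ)) % P)
    rw [he1, he2, he3, hl']
    rcases Nat.lt_or_ge (j + 1) P with hlt | hge
    · rw [Nat.mod_eq_of_lt hlt, ← Nat.add_assoc]
    · have hjeq : j + 1 = P := by omega
      rw [hjeq, Nat.mod_self, Nat.add_zero]
      rw [show n₁ + j + 1 = n₂ by omega, hlsn₂]
      simpa using hlsn₁.symm
  have hfcD : ∀ w ∈ Dp, fc w = fD w := by
    intro w hw
    rw [hfcdef]
    simp [hw]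
  -- the SPp step
  have hSPkey : ∀ w, w ∉ Dp → ∀ hS : w ∈ SPp, ∃ n, N₀ ≤ n ∧ (ls n, n % P) = w ∧
      fc w = aS n ∧ τ n - n = dist w ∧ n + 1 ≤ τ n := by
    intro w hD hS
    set n := Classical.choose (hSPex w hS) with hn
    obtain ⟨⟨hn1, hn2⟩, hn3⟩ := Classical.choose_spec (hSPex w hS)
    refine ⟨n, hn1, hn2, ?_, hn3, ?_⟩
    · rw [hfcdef]
      simp only [if_neg hD, dif_pos hS]
      rfl
    · -- τ n > n, else w = (lstar, c) ∈ Dp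
      by_contra hc'
      have hττ := hτmem n
      have hτn : τ n = n := by omega
      have : w = (lstar, (c : ℕ)) := by
        rw [← hn2, ← hττ.2.2.1, ← hττ.2.2.2, hτn]
      rw [this] at hD
      exact hD hDpt0
  -- closure of U
  have hclos : ∀ w ∈ U, ∀ l', 0 < δ w.1 (fc w) l' →
      ((l', (w.2 + 1) % P) : L × ℕ) ∈ U := by
    intro w hw l' hδl'
    by_cases hD : w ∈ Dp
    · right
      refine hDstep0 w hD l' ?_
      rwa [← hfcD w hD]
    · have hwV : w ∈ V := by
        rcases hw with hw | hw
        · exact hw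
        · exact absurd hw hD
      by_cases hS : w ∈ SPp
      · obtain ⟨n, hn1, hn2, hn3, _, _⟩ := hSPkey w hD hS
        have hl' : l' = ls (n + 1) := by
          refine hdirac n hn1 l' ?_
          rw [show ls n = w.1 by rw [← hn2], ← hn3]
          exact hδl'
        left
        refine hSPV ⟨n + 1, by omega, ?_⟩
        rw [hl']
        have : (w.2 + 1) % P = (n + 1) % P := by
          rw [show w.2 = n % P by rw [← hn2], mod_succ_mod]
        rw [this]
      · have hfc : fc w = Classical.choose (hVex w hwV hS) := by
          rw [hfcdef]
          simp only [if_neg hD, dif_neg hS, dif_pos hwV]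
        obtain ⟨hcl, -⟩ := Classical.choose_spec (hVex w hwV hS)
        left
        refine hcl l' ?_
        rwa [← hfc]
  have hDclos : ∀ w ∈ Dp, ∀ l', 0 < δ w.1 (fc w) l' →
      ((l', (w.2 + 1) % P) : L × ℕ) ∈ Dp := by
    intro w hw l' hδl'
    refine hDstep0 w hw l' ?_
    rwa [← hfcD w hw]
  -- rank decrease
  have hRdec : ∀ w ∈ U, R w ≠ 0 → ∃ l', 0 < δ w.1 (fc w) l' ∧
      R (l', (w.2 + 1) % P) < R w := by
    intro w hw hRne
    have hD : w ∉ Dp := fun hc => hRne ((hR0 w hw).2 hc)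
    have hwV : w ∈ V := by
      rcases hw with hw' | hw'
      · exact hw'
      · exact absurd hw' hD
    by_cases hS : w ∈ SPp
    · obtain ⟨n, hn1, hn2, hn3, hn4, hn5⟩ := hSPkey w hD hS
      have hτn := hτmem n
      have hδpos : 0 < δ w.1 (fc w) (ls (n + 1)) := by
        rw [hn3, show w.1 = ls n by rw [← hn2]]
        have := haS n hn1
        rw [this]
        norm_num
      refine ⟨ls (n + 1), hδpos, ?_⟩
      have hpair' : ((ls (n + 1), (w.2 + 1) % P) : L × ℕ) = (ls (n + 1), (n + 1) % P) := by
        rw [show w.2 = n % P by rw [← hn2], mod_succ_mod]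
      have hRw : R w = 1 + dist w := by
        rw [hRdef]
        simp [hD, hS]
      rw [hpair', hRw]
      by_cases hD' : ((ls (n + 1), (n + 1) % P) : L × ℕ) ∈ Dp
      · rw [hRdef]
        simp only [if_pos hD']
        omega
      · have hS' : ((ls (n + 1), (n + 1) % P) : L × ℕ) ∈ SPp := ⟨n + 1, by omega, rfl⟩
        have hRw' : R (ls (n + 1), (n + 1) % P) = 1 + dist (ls (n + 1), (n + 1) % P) := by
          rw [hRdef]
          simp [hD', hS']
        rw [hRw']
        -- dist decreases along the spine
        have hd1 : dist (ls (n + 1), (n + 1) % P) ≤ τ (n + 1) - (n + 1) := by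
          refine Nat.sInf_le ⟨n + 1, ⟨by omega, rfl⟩, rfl⟩
        have hd2 : τ (n + 1) ≤ τ n := by
          refine Nat.sInf_le ?_
          exact ⟨hn5, hτn.2.1, hτn.2.2.1, hτn.2.2.2⟩
        omega
    · have hfc : fc w = Classical.choose (hVex w hwV hS) := by
        rw [hfcdef]
        simp only [if_neg hD, dif_neg hS, dif_pos hwV]
      obtain ⟨hcl, l', hδl', hρl'⟩ := Classical.choose_spec (hVex w hwV hS)
      refine ⟨l', by rwa [hfc], ?_⟩
      have hρw : ρ w ≠ 0 := fun hc => hS (hρ0SP w hwV hc)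
      have hRw : R w = 1 + Dmax + ρ w := by
        rw [hRdef]
        simp [hD, hS]
      have hw'V : ((l', (w.2 + 1) % P) : L × ℕ) ∈ V := hcl l' hδl'
      rw [hRw, hRdef]
      by_cases hD' : ((l', (w.2 + 1) % P) : L × ℕ) ∈ Dp
      · simp only [if_pos hD']
        omega
      · simp only [if_neg hD']
        by_cases hS' : ((l', (w.2 + 1) % P) : L × ℕ) ∈ SPp
        · simp only [if_pos hS']
          have := hdistle ((l', (w.2 + 1) % P)) (Nat.mod_lt _ hP)
          omega
        · simp only [if_neg hS']
          omega
  -- initial pairs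
  have hinit : ∀ l, 0 < μ0 l → ((l, 0) : L × ℕ) ∈ U := by
    intro l hl
    left
    refine ⟨⟨l, []⟩, ?_, ?_⟩
    · have : pr μ0 δ α ⟨l, []⟩ = μ0 l := by simp [pr, prAux]
      rw [this]
      exact hl
    · simp [pairOf, Hist.last, Hist.len]
  -- target states
  set tgt : ℕ → L := fun n => ls (n₁ + (n % P + P - (c : ℕ)) % P) with htgtdef
  have htgt : ∀ n : ℕ, ∀ w ∈ Dp, w.2 = n % P → w.1 = tgt n := by
    intro n w hw hw2
    rw [htgtdef]
    rw [hw.2, hw2]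
  exact construct hμ0 hδ P U Dp fc tgt R K hK η hη0 hη1 hηδ
    (fun w hw => Or.inr hw) hclos hDclos htgt hR0 hRK hRdec hinit


end SyncMDP
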